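/- Let H be a finite-dimensional real inner product space and let A : H → H be a linear map that is a contraction, i.e., ‖A ψ‖ ≤ ‖ψ‖ for all ψ ∈ H. Then there exist linear subspaces E₁ and E₂ of H such that H is the (internal) direct sum of E₁ and E₂ (E₁ ∩ E₂ = {0} and E₁ + E₂ = H), and: (i) A maps E₁ into E₁ and ‖A ψ‖ = ‖ψ‖ for every ψ ∈ E₁; (ii) for every ψ ∈ E₂, ‖A^k ψ‖ → 0 as k → ∞. -/

import Mathlib

open Filter Topology Metric

section Aux
variable {H : Type*} [NormedAddCommGroup H] [InnerProductSpace ℝ H]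

lemma aux_norm_add (B : H →ₗ[ℝ] H) (hB : ∀ ψ, ‖B ψ‖ ≤ ‖ψ‖) {x y : H}
    (hx : ‖B x‖ = ‖x‖) (hy : ‖B y‖ = ‖y‖) : ‖B (x + y)‖ = ‖x + y‖ := by
  have h1 : ‖B x + B y‖ ^ 2 ≤ ‖x + y‖ ^ 2 := by
    rw [← map_add]; exact pow_le_pow_left₀ (norm_nonneg _) (hB _) 2
  have h2 : ‖B x - B y‖ ^ 2 ≤ ‖x - y‖ ^ 2 := by
    rw [← map_sub]; exact pow_le_pow_left₀ (norm_nonneg _) (hB _) 2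
  rw [norm_add_sq_real, norm_add_sq_real, hx, hy] at h1
  rw [norm_sub_sq_real, norm_sub_sq_real, hx, hy] at h2
  have hinner : (inner ℝ (B x) (B y) : ℝ) = inner ℝ x y := by linarith
  have hsq : ‖B (x + y)‖ ^ 2 = ‖x + y‖ ^ 2 := by
    rw [map_add, norm_add_sq_real, norm_add_sq_real, hx, hy, hinner]
  have h3 := hB (x + y)
  nlinarith [norm_nonneg (B (x + y)), norm_nonneg (x + y)]

variable (A : H →ₗ[ℝ] H)

lemma aux_anti (hA : ∀ ψ : H, ‖A ψ‖ ≤ ‖ψ‖) (ψ : H) : Antitone fun k => ‖(A ^ k) ψ‖ := by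
  apply antitone_nat_of_succ_le
  intro n
  have : (A ^ (n + 1)) ψ = A ((A ^ n) ψ) := by
    rw [pow_succ']; exact Module.End.mul_apply _ _ _
  rw [this]; exact hA _

lemma aux_pow_le (hA : ∀ ψ : H, ‖A ψ‖ ≤ ‖ψ‖) (k : ℕ) (ψ : H) : ‖(A ^ k) ψ‖ ≤ ‖ψ‖ := by
  simpa using aux_anti A hA ψ (Nat.zero_le k)

lemma aux_tendsto_iInf (hA : ∀ ψ : H, ‖A ψ‖ ≤ ‖ψ‖) (ψ : H) :
    Tendsto (fun k => ‖(A ^ k) ψ‖) atTop (𝓝 (⨅ k, ‖(A ^ k) ψ‖)) :=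
  tendsto_atTop_ciInf (aux_anti A hA ψ) ⟨0, fun _ ⟨k, hk⟩ => hk ▸ norm_nonneg _⟩

variable [FiniteDimensional ℝ H]

/-- Limit points of the orbit along a time sequence tending to infinity
lie in the "isometric" part. -/
lemma aux_limit_mem (hA : ∀ ψ : H, ‖A ψ‖ ≤ ‖ψ‖) (c : ℕ → ℕ) (hc : Tendsto c atTop atTop) (ψ φ : H)
    (hφ : Tendsto (fun n => (A ^ c n) ψ) atTop (𝓝 φ)) :
    ∀ m, ‖(A ^ m) φ‖ = ‖φ‖ := by
  set L := ⨅ k, ‖(A ^ k) ψ‖ with hL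
  have hLt := aux_tendsto_iInf A hA ψ
  have key : ∀ m : ℕ, ‖(A ^ m) φ‖ = L := by
    intro m
    have hmc : Tendsto (fun n => m + c n) atTop atTop :=
      tendsto_atTop_mono (fun n => Nat.le_add_left _ _) hc
    have h1 : Tendsto (fun n => ‖(A ^ (m + c n)) ψ‖) atTop (𝓝 L) := hLt.comp hmc
    have h2 : Tendsto (fun n => ‖(A ^ m) ((A ^ c n) ψ)‖) atTop (𝓝 ‖(A ^ m) φ‖) := by
      have hcont : Continuous ((A ^ m : H →ₗ[ℝ] H) : H → H) :=
        LinearMap.continuous_of_finiteDimensional _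
      exact (continuous_norm.tendsto _).comp ((hcont.tendsto φ).comp hφ)
    have he : (fun n => ‖(A ^ (m + c n)) ψ‖) = fun n => ‖(A ^ m) ((A ^ c n) ψ)‖ := by
      funext n; rw [pow_add, Module.End.mul_apply]
    rw [he] at h1
    exact tendsto_nhds_unique h2 h1
  intro m
  have h0 := key 0
  simp only [pow_zero, Module.End.one_apply] at h0
  rw [key m, h0]

/-- The isometric part. -/
def auxE1 (hA : ∀ ψ : H, ‖A ψ‖ ≤ ‖ψ‖) : Submodule ℝ H where
  carrier := {ψ | ∀ k, ‖(A ^ k) ψ‖ = ‖ψ‖}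
  zero_mem' := by intro k; simp
  add_mem' := by
    intro x y hx hy k
    exact aux_norm_add (A ^ k) (aux_pow_le A hA k) (hx k) (hy k)
  smul_mem' := by
    intro c x hx k
    rw [map_smul, norm_smul, norm_smul, hx k]

/-- The decaying part. -/
def auxE2 : Submodule ℝ H where
  carrier := {ψ | Tendsto (fun k => ‖(A ^ k) ψ‖) atTop (𝓝 0)}
  zero_mem' := by simp [tendsto_const_nhds]
  add_mem' := by
    intro x y hx hy
    have hb : ∀ k : ℕ, ‖(A ^ k) (x + y)‖ ≤ ‖(A ^ k) x‖ + ‖(A ^ k) y‖ := by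
      intro k; rw [map_add]; exact norm_add_le _ _
    have := squeeze_zero (f := fun k => ‖(A ^ k) (x + y)‖)
      (fun k => norm_nonneg _) hb (by simpa using hx.add hy)
    exact this
  smul_mem' := by
    intro c x hx
    have : (fun k => ‖(A ^ k) (c • x)‖) = fun k => ‖c‖ * ‖(A ^ k) x‖ := by
      funext k; rw [map_smul, norm_smul]
    show Tendsto (fun k => ‖(A ^ k) (c • x)‖) atTop (𝓝 0)
    rw [this]
    simpa using hx.const_mul ‖c‖

lemma mem_auxE1 (hA : ∀ ψ : H, ‖A ψ‖ ≤ ‖ψ‖) (ψ : H) :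
    ψ ∈ auxE1 A hA ↔ ∀ k, ‖(A ^ k) ψ‖ = ‖ψ‖ := Iff.rfl

lemma mem_auxE2 (ψ : H) :
    ψ ∈ auxE2 A ↔ Tendsto (fun k => ‖(A ^ k) ψ‖) atTop (𝓝 0) := Iff.rfl

end Aux


set_option maxHeartbeats 1000000 in
/-- For a contraction `A` on a finite-dimensional real inner product space `H`,
`H` splits as a direct sum `E₁ ⊕ E₂` where `A` maps `E₁` isometrically into
`E₁`, and `‖A^k ψ‖ → 0` for every `ψ ∈ E₂`. -/
theorem stmt_11 (H : Type*) [NormedAddCommGroup H] [InnerProductSpace ℝ H]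
    [FiniteDimensional ℝ H] (A : H →ₗ[ℝ] H) (hA : ∀ ψ : H, ‖A ψ‖ ≤ ‖ψ‖) :
    ∃ E₁ E₂ : Submodule ℝ H,
      E₁ ⊓ E₂ = ⊥ ∧ E₁ ⊔ E₂ = ⊤ ∧
      (∀ ψ ∈ E₁, A ψ ∈ E₁ ∧ ‖A ψ‖ = ‖ψ‖) ∧
      (∀ ψ ∈ E₂,
        Filter.Tendsto (fun k : ℕ => ‖(A ^ k) ψ‖) Filter.atTop (nhds 0)) := by
  refine ⟨auxE1 A hA, auxE2 A, ?_, ?_, ?_, ?_⟩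
  · -- inf = ⊥
    rw [eq_bot_iff]
    rintro x ⟨hx1, hx2⟩
    have h1 : Tendsto (fun k => ‖(A ^ k) x‖) atTop (𝓝 ‖x‖) := by
      have : (fun k => ‖(A ^ k) x‖) = fun _ => ‖x‖ := funext fun k => hx1 k
      rw [this]; exact tendsto_const_nhds
    have : ‖x‖ = 0 := tendsto_nhds_unique h1 hx2
    simpa [Submodule.mem_bot] using norm_eq_zero.mp this
  · -- sup = ⊤
    rw [eq_top_iff]
    intro ψ _
    set E₁ := auxE1 A hA with hE₁def
    haveI : ProperSpace H := FiniteDimensional.proper ℝ H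
    set d := Module.finrank ℝ E₁ with hddef
    set b : Module.Basis (Fin d) ℝ E₁ := Module.finBasis ℝ E₁ with hbdef
    set F : ℕ → (Fin d → H) := fun n i => (A ^ n) ((b i : H)) with hFdef
    have hFmem : ∀ n, F n ∈ Set.pi Set.univ (fun i => closedBall (0 : H) ‖(b i : H)‖) := by
      intro n i _
      rw [mem_closedBall_zero_iff]
      exact aux_pow_le A hA n _
    have hcompact : IsCompact (Set.pi Set.univ (fun i : Fin d => closedBall (0 : H) ‖(b i : H)‖)) :=
      isCompact_univ_pi fun i => isCompact_closedBall _ _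
    obtain ⟨u, -, g, hg, hgu⟩ := hcompact.tendsto_subseq hFmem
    have h2pow : Tendsto (fun n : ℕ => 2 ^ n) atTop atTop :=
      tendsto_atTop_mono (fun n => (Nat.lt_two_pow_self (n := n)).le) tendsto_id
    set k : ℕ → ℕ := fun n => g (2 ^ n) with hkdef
    have hku : Tendsto (fun n => F (k n)) atTop (𝓝 u) := hgu.comp h2pow
    have hkiu : ∀ i, Tendsto (fun n => (A ^ k n) ((b i : H))) atTop (𝓝 (u i)) := by
      intro i
      have := ((continuous_apply i).tendsto u).comp hku
      exact this
    have hg_add : ∀ a c : ℕ, g a + c ≤ g (a + c) := by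
      intro a c
      induction c with
      | zero => simp
      | succ c ih =>
        have := hg (show a + c < a + (c + 1) by omega)
        omega
    have hkgap : ∀ n, k n + 2 ^ n ≤ k (n + 1) := by
      intro n
      have h1 : g (2 ^ n) + 2 ^ n ≤ g (2 ^ n + 2 ^ n) := hg_add _ _
      have h2 : (2 : ℕ) ^ (n + 1) = 2 ^ n + 2 ^ n := by ring
      simp only [hkdef, h2]
      exact h1
    set m : ℕ → ℕ := fun n => k (n + 1) - k n with hmdef
    have hm_eq : ∀ n, m n + k n = k (n + 1) := by
      intro n
      have h1 := hkgap n
      have h2 : 0 < 2 ^ n := Nat.pow_pos (by norm_num)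
      simp only [hmdef]
      omega
    have hm_ge : ∀ n, n < m n := by
      intro n
      have h1 := hkgap n
      have h2 := Nat.lt_two_pow_self (n := n)
      have h3 : 0 < 2 ^ n := Nat.pow_pos (by norm_num)
      simp only [hmdef]
      omega
    have hm_top : Tendsto m atTop atTop :=
      tendsto_atTop_mono (fun n => (hm_ge n).le) tendsto_id
    have hk_ge : ∀ n, n ≤ k n := by
      intro n
      have h1 : 2 ^ n ≤ g (2 ^ n) := hg.le_apply
      have h2 := Nat.lt_two_pow_self (n := n)
      simp only [hkdef]
      omega
    have hk_top : Tendsto k atTop atTop := tendsto_atTop_mono hk_ge tendsto_id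
    -- the limit operator on E₁
    set S : E₁ →ₗ[ℝ] H := Module.Basis.constr b ℝ u with hSdef
    have hSb : ∀ i, S (b i) = u i := fun i => Module.Basis.constr_basis b ℝ u i
    have hTy : ∀ y : E₁, Tendsto (fun n => (A ^ k n) (y : H)) atTop (𝓝 (S y)) := by
      intro y
      have hrepr : ∀ n : ℕ, (A ^ k n) (y : H)
          = ∑ i, (b.repr y) i • (A ^ k n) ((b i : H)) := by
        intro n
        conv_lhs => rw [← b.sum_repr y]
        push_cast
        rw [map_sum]
        congr 1
        funext i
        rw [map_smul]
      have hSy : S y = ∑ i, (b.repr y) i • u i := by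
        conv_lhs => rw [← b.sum_repr y, map_sum]
        congr 1
        funext i
        rw [map_smul, hSb]
      rw [hSy]
      have : ∀ n, (A ^ k n) (y : H) = ∑ i, (b.repr y) i • (A ^ k n) ((b i : H)) := hrepr
      simp only [this]
      exact tendsto_finset_sum _ fun i _ => (hkiu i).const_smul _
    have hS_mem : ∀ y : E₁, S y ∈ E₁ := by
      intro y
      exact aux_limit_mem A hA k hk_top (y : H) (S y) (hTy y)
    have hS_norm : ∀ y : E₁, ‖S y‖ = ‖(y : H)‖ := by
      intro y
      have h1 : Tendsto (fun n => ‖(A ^ k n) (y : H)‖) atTop (𝓝 ‖S y‖) :=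
        (continuous_norm.tendsto _).comp (hTy y)
      have h2 : (fun n => ‖(A ^ k n) (y : H)‖) = fun _ => ‖(y : H)‖ :=
        funext fun n => y.2 (k n)
      rw [h2] at h1
      exact (tendsto_nhds_unique tendsto_const_nhds h1).symm
    set S1 : E₁ →ₗ[ℝ] E₁ := LinearMap.codRestrict E₁ S hS_mem with hS1def
    have hS1inj : Function.Injective S1 := by
      intro a c hac
      have h1 : S a = S c := congrArg Subtype.val hac
      have h2 : S (a - c) = 0 := by rw [map_sub, h1, sub_self]
      have h3 : ‖((a - c : E₁) : H)‖ = 0 := by rw [← hS_norm (a - c), h2, norm_zero]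
      have h4 : ((a - c : E₁) : H) = 0 := norm_eq_zero.mp h3
      have h5 : (a - c : E₁) = 0 := by exact_mod_cast h4
      exact sub_eq_zero.mp h5
    have hS1surj : Function.Surjective S1 := LinearMap.injective_iff_surjective.mp hS1inj
    -- A^(m n) tends to the identity on E₁
    have hAm : ∀ x : E₁, Tendsto (fun n => (A ^ m n) (x : H)) atTop (𝓝 (x : H)) := by
      intro x
      obtain ⟨y, hy⟩ := hS1surj x
      have hyx : S y = (x : H) := congrArg Subtype.val hy
      rw [tendsto_iff_norm_sub_tendsto_zero]
      have hbound : ∀ n, ‖(A ^ m n) (x : H) - (x : H)‖ ≤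
          ‖(x : H) - (A ^ k n) (y : H)‖ + ‖(A ^ k (n + 1)) (y : H) - (x : H)‖ := by
        intro n
        have e1 : (A ^ m n) ((A ^ k n) (y : H)) = (A ^ k (n + 1)) (y : H) := by
          rw [← hm_eq n, pow_add, Module.End.mul_apply]
        calc ‖(A ^ m n) (x : H) - (x : H)‖
            ≤ ‖(A ^ m n) (x : H) - (A ^ k (n + 1)) (y : H)‖ +
              ‖(A ^ k (n + 1)) (y : H) - (x : H)‖ :=
              norm_sub_le_norm_sub_add_norm_sub _ _ _
          _ ≤ ‖(x : H) - (A ^ k n) (y : H)‖ + ‖(A ^ k (n + 1)) (y : H) - (x : H)‖ := by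
              have e2 : (A ^ m n) (x : H) - (A ^ k (n + 1)) (y : H)
                  = (A ^ m n) ((x : H) - (A ^ k n) (y : H)) := by
                rw [map_sub, e1]
              rw [e2]
              exact add_le_add (aux_pow_le A hA _ _) le_rfl
      apply squeeze_zero (fun n => norm_nonneg _) hbound
      have t1 : Tendsto (fun n => ‖(x : H) - (A ^ k n) (y : H)‖) atTop (𝓝 0) := by
        have := tendsto_iff_norm_sub_tendsto_zero.mp (hyx ▸ hTy y)
        simpa [norm_sub_rev] using this
      have t2 : Tendsto (fun n => ‖(A ^ k (n + 1)) (y : H) - (x : H)‖) atTop (𝓝 0) := by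
        have h3 : Tendsto (fun n => (A ^ k (n + 1)) (y : H)) atTop (𝓝 (x : H)) :=
          (hyx ▸ hTy y).comp (tendsto_add_atTop_nat 1)
        exact tendsto_iff_norm_sub_tendsto_zero.mp h3
      simpa using t1.add t2
    -- limit point of the ψ-orbit along m
    obtain ⟨φ', -, j, hj, hjφ⟩ := (isCompact_closedBall (0 : H) ‖ψ‖).tendsto_subseq
      (x := fun n => (A ^ m n) ψ)
      (fun n => by rw [mem_closedBall_zero_iff]; exact aux_pow_le A hA _ _)
    have hmj_top : Tendsto (fun l => m (j l)) atTop atTop := by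
      apply tendsto_atTop_mono (fun l => ?_) tendsto_id
      have h1 : l ≤ j l := hj.le_apply
      have h2 := hm_ge (j l)
      simp only [id_eq]
      omega
    have hφ'_mem : φ' ∈ E₁ := by
      exact aux_limit_mem A hA (fun l => m (j l)) hmj_top ψ φ' hjφ
    have hsub : ψ - φ' ∈ auxE2 A := by
      rw [mem_auxE2]
      have hL := aux_tendsto_iInf A hA (ψ - φ')
      have h2 : Tendsto (fun l => (A ^ m (j l)) (ψ - φ')) atTop (𝓝 0) := by
        have hφ'' : Tendsto (fun l => (A ^ m (j l)) φ') atTop (𝓝 φ') :=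
          (hAm ⟨φ', hφ'_mem⟩).comp hj.tendsto_atTop
        have := hjφ.sub hφ''
        simpa [map_sub] using this
      have h1 : Tendsto (fun l => ‖(A ^ m (j l)) (ψ - φ')‖) atTop
          (𝓝 (⨅ kk, ‖(A ^ kk) (ψ - φ')‖)) := hL.comp hmj_top
      have h3 : Tendsto (fun l => ‖(A ^ m (j l)) (ψ - φ')‖) atTop (𝓝 0) := by
        have := (continuous_norm.tendsto (0 : H)).comp h2
        simpa [Function.comp_def] using this
      have hL0 : (⨅ kk, ‖(A ^ kk) (ψ - φ')‖) = 0 := tendsto_nhds_unique h1 h3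
      rw [hL0] at hL
      exact hL
    have hψeq : ψ = φ' + (ψ - φ') := by abel
    rw [hψeq]
    exact Submodule.add_mem _ (Submodule.mem_sup_left hφ'_mem)
      (Submodule.mem_sup_right hsub)
  · -- invariance and isometry on E₁
    intro ψ hψ
    have h1 : ‖A ψ‖ = ‖ψ‖ := by simpa using hψ 1
    refine ⟨fun k => ?_, h1⟩
    have : (A ^ k) (A ψ) = (A ^ (k + 1)) ψ := by
      rw [pow_succ, Module.End.mul_apply]
    rw [this, hψ (k + 1), h1]
  · exact fun ψ hψ => hψ
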